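/- Suppose (p⁰, q⁰) is a competitive equilibrium with q⁰ > 0: q⁰ maximizes ρ_{λg}(fun k => (g k − q)·π k) + q·p⁰ over q ≥ 0 and maximizes ρ_{λd}(fun k => (q − d k)·π k) − q·p⁰ over q ≥ 0. Then the equilibrium contract price lies between the extreme spot prices: min_{k} π k ≤ p⁰ ≤ max_{k} π k. -/

import Mathlib

open Finset

/-- Rockafellar–Uryasev representation of the (lower-tail) conditional value-at-risk
for `K` equally likely scenarios. -/
noncomputable def CVaR (K : ℕ) (α : ℝ) (x : Fin K → ℝ) : ℝ :=
  sSup {v : ℝ | ∃ a : ℝ, v = a + (1 / (K * (1 - α))) * ∑ k, min (x k - a) 0}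

/-- Risk-adjusted expected value: convex combination of expectation and CVaR. -/
noncomputable def riskAdj (K : ℕ) (α lam : ℝ) (x : Fin K → ℝ) : ℝ :=
  lam * ((1 / K) * ∑ k, x k) + (1 - lam) * CVaR K α x

section Aux

variable {K : ℕ} {α : ℝ}

private lemma cvar_set_nonempty (x : Fin K → ℝ) :
    Set.Nonempty {v : ℝ | ∃ a : ℝ, v = a + (1 / (K * (1 - α))) * ∑ k, min (x k - a) 0} :=
  ⟨_, 0, rfl⟩

private lemma cvar_set_bddAbove (hK : 0 < K) (hα0 : 0 ≤ α) (hα1 : α < 1) (x : Fin K → ℝ) :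
    BddAbove {v : ℝ | ∃ a : ℝ, v = a + (1 / (K * (1 - α))) * ∑ k, min (x k - a) 0} := by
  have hne : (Finset.univ : Finset (Fin K)).Nonempty :=
    Finset.univ_nonempty_iff.mpr (Fin.pos_iff_nonempty.mp hK)
  set M := Finset.univ.sup' hne x with hM
  refine ⟨M, ?_⟩
  rintro v ⟨a, rfl⟩
  have hc : (0:ℝ) ≤ 1 / (K * (1 - α)) := by
    apply div_nonneg one_pos.le
    have : (0:ℝ) < K := by exact_mod_cast hK
    nlinarith
  have hsum : ∑ k, min (x k - a) 0 ≤ ∑ _k : Fin K, min (M - a) 0 := by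
    apply Finset.sum_le_sum
    intro k _
    exact min_le_min (by linarith [Finset.le_sup' x (Finset.mem_univ k)]) le_rfl
  have hsum' : (∑ _k : Fin K, min (M - a) 0) = K * min (M - a) 0 := by
    simp [Finset.sum_const, mul_comm]
  by_cases hle : a ≤ M
  · have : min (M - a) 0 ≤ 0 := min_le_right _ _
    have h2 : (1 / (K * (1 - α))) * ∑ k, min (x k - a) 0 ≤ 0 := by
      apply mul_nonpos_of_nonneg_of_nonpos hc
      calc ∑ k, min (x k - a) 0 ≤ ∑ _k : Fin K, min (M - a) 0 := hsum
        _ = K * min (M - a) 0 := hsum'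
        _ ≤ 0 := mul_nonpos_of_nonneg_of_nonpos (by positivity) this
    linarith
  · push_neg at hle
    have hmin : min (M - a) 0 = M - a := min_eq_left (by linarith)
    have hK' : (0:ℝ) < K := by exact_mod_cast hK
    have h1α : (0:ℝ) < 1 - α := by linarith
    have hcK : (1 / (K * (1 - α))) * (K * (M - a)) = (M - a) / (1 - α) := by
      field_simp
    have h2 : (1 / (K * (1 - α))) * ∑ k, min (x k - a) 0 ≤ (M - a) / (1 - α) := by
      calc (1 / (K * (1 - α))) * ∑ k, min (x k - a) 0
          ≤ (1 / (K * (1 - α))) * (K * (M - a)) := by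
            apply mul_le_mul_of_nonneg_left _ hc
            rw [← hmin]; exact hsum.trans_eq hsum'
        _ = (M - a) / (1 - α) := hcK
    have h3 : (M - a) / (1 - α) ≤ M - a := by
      rw [div_le_iff₀ h1α]
      nlinarith
    linarith

private lemma cvar_mono (hK : 0 < K) (hα0 : 0 ≤ α) (hα1 : α < 1) (x y : Fin K → ℝ)
    (h : ∀ k, x k ≤ y k) : CVaR K α x ≤ CVaR K α y := by
  apply csSup_le (cvar_set_nonempty x)
  rintro v ⟨a, rfl⟩
  have hc : (0:ℝ) ≤ 1 / (K * (1 - α)) := by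
    apply div_nonneg one_pos.le
    have : (0:ℝ) < K := by exact_mod_cast hK
    nlinarith
  calc a + (1 / (K * (1 - α))) * ∑ k, min (x k - a) 0
      ≤ a + (1 / (K * (1 - α))) * ∑ k, min (y k - a) 0 :=
        add_le_add_right (mul_le_mul_of_nonneg_left
          (Finset.sum_le_sum fun k _ => min_le_min (by linarith [h k]) le_rfl) hc) a
    _ ≤ CVaR K α y := le_csSup (cvar_set_bddAbove hK hα0 hα1 y) ⟨a, rfl⟩

private lemma cvar_add_le (hK : 0 < K) (hα0 : 0 ≤ α) (hα1 : α < 1) (x : Fin K → ℝ) (c : ℝ) :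
    CVaR K α (fun k => x k + c) ≤ CVaR K α x + c := by
  apply csSup_le (cvar_set_nonempty _)
  rintro v ⟨a, rfl⟩
  have key : a + (1 / (K * (1 - α))) * ∑ k, min ((x k + c) - a) 0
      = (a - c) + (1 / (K * (1 - α))) * (∑ k, min (x k - (a - c)) 0) + c := by
    have h1 : ∀ k : Fin K, x k + c - a = x k - (a - c) := fun k => by ring
    simp_rw [h1]
    ring
  rw [key]
  have h2 : (a - c) + (1 / (K * (1 - α))) * (∑ k, min (x k - (a - c)) 0) ≤ CVaR K α x :=
    le_csSup (cvar_set_bddAbove hK hα0 hα1 x) ⟨a - c, rfl⟩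
  linarith

private lemma cvar_add (hK : 0 < K) (hα0 : 0 ≤ α) (hα1 : α < 1) (x : Fin K → ℝ) (c : ℝ) :
    CVaR K α (fun k => x k + c) = CVaR K α x + c := by
  refine le_antisymm (cvar_add_le hK hα0 hα1 x c) ?_
  have h := cvar_add_le hK hα0 hα1 (fun k => x k + c) (-c)
  have hx : (fun k => (x k + c) + (-c)) = x := by funext k; ring
  rw [hx] at h
  linarith

private lemma riskAdj_add (hK : 0 < K) (hα0 : 0 ≤ α) (hα1 : α < 1) (lam : ℝ)
    (x : Fin K → ℝ) (c : ℝ) :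
    riskAdj K α lam (fun k => x k + c) = riskAdj K α lam x + c := by
  unfold riskAdj
  rw [cvar_add hK hα0 hα1]
  have hK' : (K:ℝ) ≠ 0 := by positivity
  have hsum : (∑ k : Fin K, (x k + c)) = (∑ k, x k) + K * c := by
    rw [Finset.sum_add_distrib]
    simp [Finset.sum_const, mul_comm]
  rw [hsum]
  field_simp
  ring

private lemma riskAdj_mono (hK : 0 < K) (hα0 : 0 ≤ α) (hα1 : α < 1) (lam : ℝ)
    (hlam : 0 ≤ lam ∧ lam ≤ 1) (x y : Fin K → ℝ) (h : ∀ k, x k ≤ y k) :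
    riskAdj K α lam x ≤ riskAdj K α lam y := by
  unfold riskAdj
  have h1 : (1 / (K:ℝ)) * ∑ k, x k ≤ (1 / (K:ℝ)) * ∑ k, y k := by
    apply mul_le_mul_of_nonneg_left (Finset.sum_le_sum fun k _ => h k) (by positivity)
  have h2 := cvar_mono hK hα0 hα1 x y h
  nlinarith [hlam.1, hlam.2]

end Aux

/-- At a competitive equilibrium with strictly positive traded quantity, the equilibrium
contract price lies between the smallest and the largest spot price scenarios. -/
theorem equilibrium_price_between_extreme_spot_prices (K : ℕ) (hK : 0 < K)
    (α : ℝ) (hα0 : 0 ≤ α) (hα1 : α < 1)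
    (lamg lamd : ℝ) (hlamg : 0 ≤ lamg ∧ lamg ≤ 1) (hlamd : 0 ≤ lamd ∧ lamd ≤ 1)
    (g d π : Fin K → ℝ) (p₀ q₀ : ℝ) (hq₀ : 0 < q₀)
    (hgen : ∀ q : ℝ, 0 ≤ q →
      riskAdj K α lamg (fun k => (g k - q) * π k) + q * p₀ ≤
        riskAdj K α lamg (fun k => (g k - q₀) * π k) + q₀ * p₀)
    (hload : ∀ q : ℝ, 0 ≤ q →
      riskAdj K α lamd (fun k => (q - d k) * π k) - q * p₀ ≤
        riskAdj K α lamd (fun k => (q₀ - d k) * π k) - q₀ * p₀) :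
    Finset.univ.inf' (Finset.univ_nonempty_iff.mpr (Fin.pos_iff_nonempty.mp hK)) π ≤ p₀ ∧
    p₀ ≤ Finset.univ.sup' (Finset.univ_nonempty_iff.mpr (Fin.pos_iff_nonempty.mp hK)) π := by
  
  have hne : (Finset.univ : Finset (Fin K)).Nonempty :=
    Finset.univ_nonempty_iff.mpr (Fin.pos_iff_nonempty.mp hK)
  set M := Finset.univ.sup' hne π with hMdef
  set m := Finset.univ.inf' hne π with hmdef
  set x : Fin K → ℝ := fun k => (g k - q₀) * π k with hx
  constructor
  · -- lower bound: use q = 0 for the generator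
    have h0 := hgen 0 le_rfl
    have he : (fun k => (g k - 0) * π k) = fun k => (x k + q₀ * π k) := by
      funext k; simp [hx]; ring
    rw [he] at h0
    have hmono : riskAdj K α lamg (fun k => x k + q₀ * m) ≤
        riskAdj K α lamg (fun k => x k + q₀ * π k) := by
      apply riskAdj_mono hK hα0 hα1 lamg hlamg
      intro k
      have : m ≤ π k := Finset.inf'_le π (Finset.mem_univ k)
      nlinarith
    rw [riskAdj_add hK hα0 hα1] at hmono
    have : riskAdj K α lamg x + q₀ * m ≤ riskAdj K α lamg x + q₀ * p₀ := by
      calc riskAdj K α lamg x + q₀ * m ≤ riskAdj K α lamg (fun k => x k + q₀ * π k) := hmono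
        _ ≤ riskAdj K α lamg x + q₀ * p₀ := by simpa [hx] using h0
    have := le_of_mul_le_mul_left (by linarith : q₀ * m ≤ q₀ * p₀) hq₀
    exact this
  · -- upper bound: use q = q₀ + 1 for the generator
    have h1 := hgen (q₀ + 1) (by linarith)
    have he : (fun k => (g k - (q₀ + 1)) * π k) = fun k => (x k + (-(π k))) := by
      funext k; simp [hx]; ring
    rw [he] at h1
    have hmono : riskAdj K α lamg (fun k => x k + (-M)) ≤
        riskAdj K α lamg (fun k => x k + (-(π k))) := by
      apply riskAdj_mono hK hα0 hα1 lamg hlamg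
      intro k
      have : π k ≤ M := Finset.le_sup' π (Finset.mem_univ k)
      linarith
    rw [riskAdj_add hK hα0 hα1] at hmono
    have hch : riskAdj K α lamg x + (-M) + (q₀ + 1) * p₀ ≤ riskAdj K α lamg x + q₀ * p₀ := by
      calc riskAdj K α lamg x + (-M) + (q₀ + 1) * p₀
          ≤ riskAdj K α lamg (fun k => x k + (-(π k))) + (q₀ + 1) * p₀ := by linarith
        _ ≤ riskAdj K α lamg x + q₀ * p₀ := by simpa [hx] using h1
    linarith
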